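/- For every n ≥ 3, the number of permutations π ∈ S_n such that π avoids both 213 and 312, π² avoids the consecutive pattern 213, and π(n) = 1, equals 2^{n−3} + 1. -/

import Mathlib

/-- `π` contains the (classical) pattern `σ`: there is a strictly increasing
sequence of positions on which `π` is order isomorphic to `σ`. -/
def ContainsPat {n k : ℕ} (π : Equiv.Perm (Fin n)) (σ : Equiv.Perm (Fin k)) : Prop :=
  ∃ f : Fin k → Fin n, StrictMono f ∧ ∀ a b : Fin k, σ a < σ b ↔ π (f a) < π (f b)

/-- `π` avoids the pattern `σ`. -/
def AvoidsPat {n k : ℕ} (π : Equiv.Perm (Fin n)) (σ : Equiv.Perm (Fin k)) : Prop :=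
  ¬ ContainsPat π σ

/-- `π` contains the consecutive pattern `σ`: some `k` consecutive positions of `π`
carry values order isomorphic to `σ`. -/
def ContainsConsecPat {n k : ℕ} (π : Equiv.Perm (Fin n)) (σ : Equiv.Perm (Fin k)) : Prop :=
  ∃ (i : ℕ) (h : i + k ≤ n), ∀ a b : Fin k,
    σ a < σ b ↔ π ⟨i + a.val, by have := a.isLt; omega⟩ < π ⟨i + b.val, by have := b.isLt; omega⟩

/-- `π` avoids the consecutive pattern `σ`. -/
def AvoidsConsecPat {n k : ℕ} (π : Equiv.Perm (Fin n)) (σ : Equiv.Perm (Fin k)) : Prop :=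
  ¬ ContainsConsecPat π σ

/-- the pattern 231 (0-indexed: 0 ↦ 1, 1 ↦ 2, 2 ↦ 0) -/
def p231 : Equiv.Perm (Fin 3) := c[0, 1, 2]

/-- the pattern 312 (0-indexed: 0 ↦ 2, 1 ↦ 0, 2 ↦ 1) -/
def p312 : Equiv.Perm (Fin 3) := c[0, 2, 1]

/-- the pattern 213 (0-indexed: 0 ↦ 1, 1 ↦ 0, 2 ↦ 2) -/
def p213 : Equiv.Perm (Fin 3) := c[0, 1]

/-- the pattern 1432 (0-indexed: 0 ↦ 0, 1 ↦ 3, 2 ↦ 2, 3 ↦ 1) -/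
def p1432 : Equiv.Perm (Fin 4) := c[1, 3]

/-- direct sum of two permutations -/
def dsum {k m : ℕ} (σ : Equiv.Perm (Fin k)) (τ : Equiv.Perm (Fin m)) :
    Equiv.Perm (Fin (k + m)) :=
  finSumFinEquiv.symm.trans ((Equiv.sumCongr σ τ).trans finSumFinEquiv)

/-- the Lucas numbers: L₁ = 1, L₂ = 3, L_m = L_{m-1} + L_{m-2} -/
def lucas : ℕ → ℕ
  | 0 => 2
  | 1 => 1
  | n + 2 => lucas (n + 1) + lucas n

namespace Stmt12

variable {n : ℕ}

/-- value of `π` at natural-number position `i` -/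
def pv (π : Equiv.Perm (Fin n)) (i : ℕ) : ℕ :=
  if h : i < n then (π ⟨i, h⟩ : Fin n).val else 0

lemma pv_def (π : Equiv.Perm (Fin n)) {i : ℕ} (h : i < n) :
    pv π i = (π ⟨i, h⟩ : Fin n).val := dif_pos h

lemma pv_val (π : Equiv.Perm (Fin n)) (i : Fin n) : (π i).val = pv π i.val := by
  rw [pv_def π i.isLt]

lemma pv_lt (π : Equiv.Perm (Fin n)) {i : ℕ} (h : i < n) : pv π i < n := by
  rw [pv_def π h]; exact (π ⟨i, h⟩).isLt

lemma pv_inj (π : Equiv.Perm (Fin n)) {i j : ℕ} (hi : i < n) (hj : j < n)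
    (h : pv π i = pv π j) : i = j := by
  rw [pv_def π hi, pv_def π hj] at h
  exact congrArg Fin.val (π.injective (Fin.ext h))

lemma pv_sq (π : Equiv.Perm (Fin n)) {i : ℕ} (h : i < n) :
    pv (π ^ 2) i = pv π (pv π i) := by
  have h2 : pv π i < n := pv_lt π h
  have e : (⟨pv π i, h2⟩ : Fin n) = π ⟨i, h⟩ := Fin.ext (pv_def π h)
  rw [pv_def _ h, pv_def π h2, e, pow_two, Equiv.Perm.mul_apply]

lemma pv_lt_iff (π : Equiv.Perm (Fin n)) {i j : ℕ} (hi : i < n) (hj : j < n) :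
    π ⟨i, hi⟩ < π ⟨j, hj⟩ ↔ pv π i < pv π j := by
  rw [pv_def π hi, pv_def π hj, Fin.lt_def]

lemma pv_symm (π : Equiv.Perm (Fin n)) {v : ℕ} (hv : v < n) :
    pv π ((π.symm ⟨v, hv⟩).val) = v := by
  rw [pv_def π (π.symm ⟨v, hv⟩).isLt]
  simp

/-- unimodality data for the position-value function -/
structure Uni (n m : ℕ) (p : ℕ → ℕ) : Prop where
  mono : ∀ i j, i < j → j ≤ m → p i < p j
  anti : ∀ i j, m ≤ i → i < j → j < n → p j < p i

lemma Uni.monoChain {m : ℕ} {p : ℕ → ℕ} (h : Uni n m p) :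
    ∀ d a, a + d ≤ m → p a + d ≤ p (a + d) := by
  intro d
  induction d with
  | zero => intro a _; simp
  | succ d ih =>
    intro a ha
    have h1 := ih a (by omega)
    have h2 := h.mono (a + d) (a + d + 1) (by omega) (by omega)
    rw [show a + (d + 1) = a + d + 1 from rfl]
    omega

lemma Uni.antiChain {m : ℕ} {p : ℕ → ℕ} (h : Uni n m p) :
    ∀ d a, m ≤ a → a + d < n → p (a + d) + d ≤ p a := by
  intro d
  induction d with
  | zero => intro a _ _; simp
  | succ d ih =>
    intro a ha hd
    have h1 := ih a ha (by rw [show a + (d + 1) = a + d + 1 from rfl] at hd; omega)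
    have h2 := h.anti (a + d) (a + d + 1) (by omega) (by omega)
      (by rw [show a + (d + 1) = a + d + 1 from rfl] at hd; omega)
    rw [show a + (d + 1) = a + d + 1 from rfl]
    omega


lemma strictMono3 {i j l : ℕ} (hij : i < j) (hjl : j < l) (hl : l < n) :
    StrictMono (![⟨i, by omega⟩, ⟨j, by omega⟩, ⟨l, hl⟩] : Fin 3 → Fin n) := by
  intro a b hab
  fin_cases a <;> fin_cases b <;>
    simp_all [Fin.lt_def] <;> omega

lemma containsPat_of3 (π : Equiv.Perm (Fin n)) (σ : Equiv.Perm (Fin 3)) {i j l : ℕ}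
    (hij : i < j) (hjl : j < l) (hl : l < n)
    (h01 : σ 0 < σ 1 ↔ pv π i < pv π j)
    (h02 : σ 0 < σ 2 ↔ pv π i < pv π l)
    (h12 : σ 1 < σ 2 ↔ pv π j < pv π l)
    (h10 : σ 1 < σ 0 ↔ pv π j < pv π i)
    (h20 : σ 2 < σ 0 ↔ pv π l < pv π i)
    (h21 : σ 2 < σ 1 ↔ pv π l < pv π j) : ContainsPat π σ := by
  have hi : i < n := by omega
  have hj : j < n := by omega
  refine ⟨![⟨i, by omega⟩, ⟨j, by omega⟩, ⟨l, hl⟩], strictMono3 hij hjl hl, ?_⟩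
  intro a b
  fin_cases a <;> fin_cases b
  · exact iff_of_false (lt_irrefl _) (lt_irrefl _)
  · show σ 0 < σ 1 ↔ π ⟨i, hi⟩ < π ⟨j, hj⟩
    rw [pv_lt_iff π]; exact h01
  · show σ 0 < σ 2 ↔ π ⟨i, hi⟩ < π ⟨l, hl⟩
    rw [pv_lt_iff π]; exact h02
  · show σ 1 < σ 0 ↔ π ⟨j, hj⟩ < π ⟨i, hi⟩
    rw [pv_lt_iff π]; exact h10
  · exact iff_of_false (lt_irrefl _) (lt_irrefl _)
  · show σ 1 < σ 2 ↔ π ⟨j, hj⟩ < π ⟨l, hl⟩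
    rw [pv_lt_iff π]; exact h12
  · show σ 2 < σ 0 ↔ π ⟨l, hl⟩ < π ⟨i, hi⟩
    rw [pv_lt_iff π]; exact h20
  · show σ 2 < σ 1 ↔ π ⟨l, hl⟩ < π ⟨j, hj⟩
    rw [pv_lt_iff π]; exact h21
  · exact iff_of_false (lt_irrefl _) (lt_irrefl _)

lemma contains213_of (π : Equiv.Perm (Fin n)) {i j l : ℕ} (hij : i < j) (hjl : j < l)
    (hl : l < n) (hji : pv π j < pv π i) (hil : pv π i < pv π l) : ContainsPat π p213 := by
  refine containsPat_of3 π p213 hij hjl hl ?_ ?_ ?_ ?_ ?_ ?_ <;>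
    refine ⟨fun hh => ?_, fun hh => ?_⟩ <;>
    first
      | omega
      | exact absurd hh (by decide)
      | decide
      | exact absurd hh (by omega)

lemma contains312_of (π : Equiv.Perm (Fin n)) {i j l : ℕ} (hij : i < j) (hjl : j < l)
    (hl : l < n) (hjl' : pv π j < pv π l) (hli : pv π l < pv π i) : ContainsPat π p312 := by
  refine containsPat_of3 π p312 hij hjl hl ?_ ?_ ?_ ?_ ?_ ?_ <;>
    refine ⟨fun hh => ?_, fun hh => ?_⟩ <;>
    first
      | omega
      | exact absurd hh (by decide)
      | decide
      | exact absurd hh (by omega)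

lemma consec213_intro {ρ : Equiv.Perm (Fin n)} {i : ℕ} (h : i + 3 ≤ n)
    (h1 : pv ρ (i + 1) < pv ρ i) (h2 : pv ρ i < pv ρ (i + 2)) :
    ContainsConsecPat ρ p213 := by
  have h12 : pv ρ (i + 1) < pv ρ (i + 2) := h1.trans h2
  refine ⟨i, h, fun a b => ?_⟩
  have ha : i + a.val < n := by have := a.isLt; omega
  have hb : i + b.val < n := by have := b.isLt; omega
  refine Iff.trans ?_ (pv_lt_iff ρ ha hb).symm
  fin_cases a <;> fin_cases b <;>
    simp only [Fin.isValue, Fin.val_zero, Fin.val_one, Fin.val_two, Nat.add_zero] <;>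
    refine ⟨fun hh => ?_, fun hh => ?_⟩ <;>
    first
      | omega
      | exact absurd hh (by decide)
      | decide
      | (exact absurd hh (by omega))

lemma consec213_elim {ρ : Equiv.Perm (Fin n)} (h : ContainsConsecPat ρ p213) :
    ∃ i, i + 3 ≤ n ∧ pv ρ (i + 1) < pv ρ i ∧ pv ρ i < pv ρ (i + 2) := by
  obtain ⟨i, hi, hiff⟩ := h
  have key : ∀ a b : Fin 3, p213 a < p213 b → pv ρ (i + a.val) < pv ρ (i + b.val) := by
    intro a b hab
    have ha : i + a.val < n := by have := a.isLt; omega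
    have hb : i + b.val < n := by have := b.isLt; omega
    exact (pv_lt_iff ρ ha hb).mp ((hiff a b).mp hab)
  have k1 := key 1 0 (by decide)
  have k2 := key 0 2 (by decide)
  simp only [Fin.val_zero, Fin.val_one, Fin.val_two, Nat.add_zero] at k1 k2
  exact ⟨i, hi, k1, k2⟩


lemma uni_of_avoids (π : Equiv.Perm (Fin n)) (hn : 1 ≤ n)
    (h1 : AvoidsPat π p213) (h2 : AvoidsPat π p312) :
    ∃ m, m < n ∧ pv π m = n - 1 ∧ Uni n m (pv π) := by
  set m := (π.symm ⟨n - 1, by omega⟩).val with hm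
  have hmn : m < n := (π.symm ⟨n - 1, by omega⟩).isLt
  have hpeak : pv π m = n - 1 := pv_symm π (by omega)
  have huniq : ∀ i, i < n → i ≠ m → pv π i < n - 1 := by
    intro i hi hne
    have hlt := pv_lt π hi
    have : pv π i ≠ n - 1 := fun h => hne (pv_inj π hi hmn (by omega))
    omega
  refine ⟨m, hmn, hpeak, ?_, ?_⟩
  · intro i j hij hjm
    by_contra hcon
    have hj : j < n := by omega
    have hi : i < n := by omega
    have hij' : pv π j < pv π i := by
      have : pv π i ≠ pv π j := fun h => by have := pv_inj π hi hj h; omega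
      omega
    rcases eq_or_lt_of_le hjm with he | hlt
    · have h1 := huniq i hi (by omega)
      rw [he] at hij'
      omega
    · exact h1 (contains213_of π hij hlt hmn hij'
        (by have := huniq i hi (by omega); omega))
  · intro i j him hij hj
    by_contra hcon
    have hi : i < n := by omega
    have hij' : pv π i < pv π j := by
      have : pv π i ≠ pv π j := fun h => by have := pv_inj π hi hj h; omega
      omega
    rcases eq_or_lt_of_le him with he | hlt
    · have h1 := huniq j hj (by omega)
      rw [← he] at hij'
      omega
    · exact h2 (contains312_of π hlt hij hj hij'
        (by have := huniq j hj (by omega); omega))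

lemma avoids_of_uni (π : Equiv.Perm (Fin n)) {m : ℕ} (hu : Uni n m (pv π)) :
    AvoidsPat π p213 ∧ AvoidsPat π p312 := by
  have key : ∀ σ : Equiv.Perm (Fin 3), σ 1 < σ 0 → σ 1 < σ 2 → ¬ ContainsPat π σ := by
    rintro σ hσ0 hσ2 ⟨f, hf, hiff⟩
    have h10 : pv π (f 1).val < pv π (f 0).val := by
      have := (hiff 1 0).mp hσ0; rw [Fin.lt_def, pv_val, pv_val] at this; exact this
    have h12 : pv π (f 1).val < pv π (f 2).val := by
      have := (hiff 1 2).mp hσ2; rw [Fin.lt_def, pv_val, pv_val] at this; exact this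
    have h01 : (f 0).val < (f 1).val := by
      have := hf (show (0 : Fin 3) < 1 by decide); rwa [Fin.lt_def] at this
    have h12' : (f 1).val < (f 2).val := by
      have := hf (show (1 : Fin 3) < 2 by decide); rwa [Fin.lt_def] at this
    by_cases hc : (f 1).val ≤ m
    · exact absurd (hu.mono (f 0).val (f 1).val h01 hc) (by omega)
    · exact absurd (hu.anti (f 1).val (f 2).val (by omega) h12' (f 2).isLt) (by omega)
  exact ⟨key p213 (by decide) (by decide), key p312 (by decide) (by decide)⟩

lemma avoidsConsecSq (π : Equiv.Perm (Fin n)) (m : ℕ) (hn : 3 ≤ n) (hmn : m < n)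
    (hu : Uni n m (pv π)) (hpeak : pv π m = n - 1) (hlast : pv π (n - 1) = 0)
    (hspec : m + 2 < n → pv π (m + 1) = n - 2) :
    AvoidsConsecPat (π ^ 2) p213 := by
  intro hcon
  obtain ⟨i, h3, hd, hup⟩ := consec213_elim hcon
  rw [pv_sq π (by omega)] at hd hup
  rw [pv_sq π (by omega)] at hd
  rw [pv_sq π (by omega)] at hup
  set x := pv π i with hx
  set y := pv π (i + 1) with hy
  set z := pv π (i + 2) with hz
  have hxn : x < n := pv_lt π (by omega)
  have hyn : y < n := pv_lt π (by omega)
  have hzn : z < n := pv_lt π (by omega)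
  have hmlt : m < n - 1 := by
    have : m ≠ n - 1 := fun h => by rw [h, hlast] at hpeak; omega
    omega
  rcases show i + 2 ≤ m ∨ m ≤ i ∨ i + 1 = m from by omega with hC | hC | hC
  · -- all in increasing part
    have hxy : x < y := hu.mono i (i + 1) (by omega) (by omega)
    have hyz : y < z := hu.mono (i + 1) (i + 2) (by omega) (by omega)
    by_cases hym : y ≤ m
    · exact absurd (hu.mono x y hxy hym) (by omega)
    · have := hu.anti y z (by omega) hyz hzn; omega
  · -- all in decreasing part
    have hxy : y < x := hu.anti i (i + 1) (by omega) (by omega) (by omega)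
    have hyz : z < y := hu.anti (i + 1) (i + 2) (by omega) (by omega) (by omega)
    by_cases hxm : x ≤ m
    · exact absurd (hu.mono z x (by omega) hxm) (by omega)
    · by_cases hym2 : m ≤ y
      · have := hu.anti y x hym2 (by omega) hxn; omega
      · have := hu.mono z y (by omega) (by omega); omega
  · -- peak in the middle : i + 1 = m
    have hym : y = n - 1 := by rw [hy, hC, hpeak]
    have h00 : pv π 0 ≠ 0 := fun h => by
      have := pv_inj π (by omega) (by omega) (h.trans hlast.symm); omega
    have hxge : m ≤ x := by
      have := hu.monoChain i 0 (by omega)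
      rw [show 0 + i = i from by omega] at this
      omega
    have hxne : x ≠ n - 1 := by
      intro h
      have : pv π i = pv π m := by rw [← hx, h, hpeak]
      have := pv_inj π (by omega) (by omega) this
      omega
    rcases eq_or_lt_of_le (show m + 2 ≤ n from by omega) with hE | hE
    · -- m + 2 = n : x = m, pv x = n - 1 maximal
      have hxm : x = m := by omega
      have : pv π x = n - 1 := by rw [hxm, hpeak]
      have := pv_lt π hzn
      omega
    · -- m + 2 < n
      have hnext : pv π (m + 1) = n - 2 := hspec hE
      have hzval : z = n - 2 := by rw [hz, show i + 2 = m + 1 from by omega, hnext]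
      have hub : pv π (n - 2) + (n - 3 - m) ≤ n - 2 := by
        have := hu.antiChain (n - 3 - m) (m + 1) (by omega) (by omega)
        rw [show m + 1 + (n - 3 - m) = n - 2 from by omega, hnext] at this
        exact this
      have hxne2 : x ≠ n - 2 := by
        intro h
        have : pv π i = pv π (m + 1) := by rw [← hx, h, hnext]
        have := pv_inj π (by omega) (by omega) this
        omega
      rw [hzval] at hup
      by_cases hxm2 : x ≤ m
      · have hmono := hu.monoChain x 0 (by omega)
        rw [show 0 + x = x from by omega] at hmono
        have hne' : pv π x ≠ pv π (n - 2) := fun h => by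
          have := pv_inj π (by omega) (by omega) h; omega
        omega
      · have := hu.anti x (n - 2) (by omega) (by omega) (by omega)
        omega

lemma containsConsecSq (π : Equiv.Perm (Fin n)) (m : ℕ) (hn : 3 ≤ n) (hm2 : m + 2 < n)
    (hu : Uni n m (pv π)) (hpeak : pv π m = n - 1) (hlast : pv π (n - 1) = 0)
    (hne : pv π (m + 1) ≠ n - 2) : ContainsConsecPat (π ^ 2) p213 := by
  have hm1 : 1 ≤ m := by
    by_contra h
    have h0 : m = 0 := by omega
    subst h0
    have hA := hu.antiChain (n - 2) 1 (by omega) (by omega)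
    rw [show 1 + (n - 2) = n - 1 from by omega, hlast] at hA
    have hB := hu.anti 0 1 (by omega) (by omega) (by omega)
    rw [hpeak] at hB
    simp only [Nat.zero_add] at hne
    exact hne (by omega)
  set pos := (π.symm ⟨n - 2, by omega⟩).val with hpos
  have hposn : pos < n := (π.symm _).isLt
  have hpv_pos : pv π pos = n - 2 := pv_symm π (by omega)
  have hne_m : pos ≠ m := fun h => by rw [h, hpeak] at hpv_pos; omega
  have hne_m1 : pos ≠ m + 1 := fun h => hne (by rw [← h]; exact hpv_pos)
  have hne_last : pos ≠ n - 1 := fun h => by rw [h, hlast] at hpv_pos; omega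
  have hposm : pos = m - 1 := by
    by_contra hc
    rcases Nat.lt_or_ge pos m with hlt | hge
    · have hA := hu.mono pos (m - 1) (by omega) (by omega)
      have hB := hu.mono (m - 1) m (by omega) (by omega)
      rw [hpeak] at hB
      have := pv_lt π (show m - 1 < n from by omega)
      omega
    · have hA := hu.anti (m + 1) pos (by omega) (by omega) hposn
      have hB := pv_lt π (show m + 1 < n from by omega)
      have hcontra : pv π (m + 1) = n - 1 := by omega
      have := pv_inj π (show m + 1 < n by omega) (by omega) (hcontra.trans hpeak.symm)
      omega
  rw [hposm] at hpv_pos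
  set v := pv π (m + 1) with hv
  have hvn : v < n := pv_lt π (by omega)
  have hvne1 : v ≠ n - 1 := fun h => by
    have : pv π (m + 1) = pv π m := by rw [← hv, h, hpeak]
    have := pv_inj π (by omega) (by omega) this
    omega
  have hvle : v ≤ n - 3 := by omega
  have hn2pos : pv π (n - 2) ≠ 0 := fun h => by
    have := pv_inj π (by omega) (by omega) (h.trans hlast.symm); omega
  have hub : pv π (n - 2) + (n - 3 - m) ≤ v := by
    have := hu.antiChain (n - 3 - m) (m + 1) (by omega) (by omega)
    rw [show m + 1 + (n - 3 - m) = n - 2 from by omega] at this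
    omega
  have hkey : pv π (n - 2) < pv π v := by
    rcases Nat.lt_or_ge m v with hgt | hle
    · exact hu.anti v (n - 2) (by omega) (by omega) (by omega)
    · have hmono := hu.monoChain v 0 (by omega)
      rw [show 0 + v = v from by omega] at hmono
      have h0 : pv π 0 ≠ 0 := fun h => by
        have := pv_inj π (by omega) (by omega) (h.trans hlast.symm); omega
      omega
  refine consec213_intro (i := m - 1) (by omega) ?_ ?_
  · rw [pv_sq π (by omega), pv_sq π (by omega), show m - 1 + 1 = m from by omega,
      hpeak, hlast, hpv_pos]
    omega
  · rw [pv_sq π (by omega), pv_sq π (by omega), show m - 1 + 2 = m + 1 from by omega,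
      hpv_pos, ← hv]
    exact hkey


/-! ### the construction -/

lemma val_mk' {N a : ℕ} (h : a < N) : ((⟨a, h⟩ : Fin N)).val = a := rfl

def sIn (a : Fin (n - 3)) : Fin n := ⟨a.val + 1, by have := a.isLt; omega⟩

lemma sIn_injective : Function.Injective (sIn (n := n)) := by
  intro a b h
  have := congrArg Fin.val h
  simp only [sIn] at this
  exact Fin.ext (by omega)

def Sset (A : Finset (Fin (n - 3))) : Finset (Fin n) := A.image sIn

lemma card_Sset (A : Finset (Fin (n - 3))) : (Sset A).card = A.card :=
  Finset.card_image_of_injective _ sIn_injective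

lemma mem_Sset_iff {A : Finset (Fin (n - 3))} {x : Fin n} :
    x ∈ Sset A ↔ ∃ a ∈ A, x.val = a.val + 1 := by
  simp only [Sset, Finset.mem_image, sIn]
  constructor
  · rintro ⟨a, ha, rfl⟩; exact ⟨a, ha, rfl⟩
  · rintro ⟨a, ha, hv⟩; exact ⟨a, ha, Fin.ext hv.symm⟩

lemma mem_Sset_bounds {A : Finset (Fin (n - 3))} {x : Fin n} (hx : x ∈ Sset A) :
    1 ≤ x.val ∧ x.val ≤ n - 3 := by
  obtain ⟨a, _, hv⟩ := mem_Sset_iff.mp hx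
  have := a.isLt
  omega

lemma card_le (A : Finset (Fin (n - 3))) : A.card ≤ n - 3 := by
  have := Finset.card_le_univ A
  simpa using this

def Dset (hn : 3 ≤ n) (A : Finset (Fin (n - 3))) : Finset (Fin n) :=
  (insert (⟨n - 1, Nat.sub_lt (Nat.lt_of_lt_of_le (by decide) hn) Nat.one_pos⟩ : Fin n) (Sset A))ᶜ

lemma mem_Dset {hn : 3 ≤ n} {A : Finset (Fin (n - 3))} {x : Fin n} :
    x ∈ Dset hn A ↔ (x.val ≠ n - 1 ∧ x ∉ Sset A) := by
  simp only [Dset, Finset.mem_compl, Finset.mem_insert, not_or]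
  constructor
  · rintro ⟨h1, h2⟩; exact ⟨fun h => h1 (Fin.ext h), h2⟩
  · rintro ⟨h1, h2⟩; exact ⟨fun h => h1 (congrArg Fin.val h), h2⟩

lemma card_Dset (hn : 3 ≤ n) (A : Finset (Fin (n - 3))) :
    (Dset hn A).card = n - 1 - A.card := by
  have hnm : (⟨n - 1, by omega⟩ : Fin n) ∉ Sset A := by
    intro h
    have := (mem_Sset_bounds h).2
    simp only at this
    omega
  rw [Dset, Finset.card_compl, Finset.card_insert_of_notMem hnm, card_Sset,
    Fintype.card_fin]
  omega

lemma zero_mem_Dset (hn : 3 ≤ n) (A : Finset (Fin (n - 3))) :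
    (⟨0, Nat.lt_of_lt_of_le (by decide) hn⟩ : Fin n) ∈ Dset hn A := by
  rw [mem_Dset]
  refine ⟨by (try simp only [val_mk']); omega, fun h => ?_⟩
  have := (mem_Sset_bounds h).1
  simp only at this
  omega

lemma top_mem_Dset (hn : 3 ≤ n) (A : Finset (Fin (n - 3))) :
    (⟨n - 2, by omega⟩ : Fin n) ∈ Dset hn A := by
  rw [mem_Dset]
  refine ⟨by (try simp only [val_mk']); omega, fun h => ?_⟩
  have := (mem_Sset_bounds h).2
  simp only at this
  omega

def fA (hn : 3 ≤ n) (A : Finset (Fin (n - 3))) : Fin n → Fin n := fun i =>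
  if h : (i : ℕ) < A.card then (Sset A).orderEmbOfFin (card_Sset A) ⟨i, h⟩
  else if h2 : (i : ℕ) = A.card then ⟨n - 1, by omega⟩
  else (Dset hn A).orderEmbOfFin (card_Dset hn A)
    ⟨n - 1 - i, by have h3 := i.isLt; have h4 := card_le A; omega⟩

lemma fA_br1 (hn : 3 ≤ n) (A : Finset (Fin (n - 3))) {i : Fin n} (h : i.val < A.card) :
    fA hn A i = (Sset A).orderEmbOfFin (card_Sset A) ⟨i.val, h⟩ := by
  simp only [fA]
  rw [dif_pos h]

lemma fA_br2 (hn : 3 ≤ n) (A : Finset (Fin (n - 3))) {i : Fin n} (h : i.val = A.card) :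
    fA hn A i = ⟨n - 1, by omega⟩ := by
  simp only [fA]
  rw [dif_neg (by omega), dif_pos h]

lemma fA_br3 (hn : 3 ≤ n) (A : Finset (Fin (n - 3))) {i : Fin n} (h : A.card < i.val) :
    fA hn A i = (Dset hn A).orderEmbOfFin (card_Dset hn A)
      ⟨n - 1 - i.val, by have h3 := i.isLt; have h4 := card_le A; omega⟩ := by
  simp only [fA]
  rw [dif_neg (by omega), dif_neg (by omega)]

lemma fA_injective (hn : 3 ≤ n) (A : Finset (Fin (n - 3))) :
    Function.Injective (fA hn A) := by
  intro i j hEq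
  rcases lt_trichotomy i.val A.card with hi | hi | hi <;>
      rcases lt_trichotomy j.val A.card with hj | hj | hj
  · rw [fA_br1 hn A hi, fA_br1 hn A hj] at hEq
    have := ((Sset A).orderEmbOfFin (card_Sset A)).injective hEq
    simp only [Fin.mk.injEq] at this
    exact Fin.ext this
  · rw [fA_br1 hn A hi, fA_br2 hn A hj] at hEq
    have h1 := (mem_Sset_bounds (hEq ▸ Finset.orderEmbOfFin_mem _ _ _)).2
    simp only at h1
    omega
  · rw [fA_br1 hn A hi, fA_br3 hn A hj] at hEq
    have h1 := Finset.orderEmbOfFin_mem (Sset A) (card_Sset A) ⟨i.val, hi⟩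
    rw [hEq] at h1
    have h2 := Finset.orderEmbOfFin_mem (Dset hn A) (card_Dset hn A)
      ⟨n - 1 - j.val, by have h3 := j.isLt; have h4 := card_le A; omega⟩
    exact absurd h1 (mem_Dset.mp h2).2
  · rw [fA_br2 hn A hi, fA_br1 hn A hj] at hEq
    have h1 := (mem_Sset_bounds (hEq ▸ Finset.orderEmbOfFin_mem _ _ _)).2
    simp only at h1
    omega
  · exact Fin.ext (hi.trans hj.symm)
  · rw [fA_br2 hn A hi, fA_br3 hn A hj] at hEq
    have h2 := Finset.orderEmbOfFin_mem (Dset hn A) (card_Dset hn A)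
      ⟨n - 1 - j.val, by have h3 := j.isLt; have h4 := card_le A; omega⟩
    rw [← hEq] at h2
    have := (mem_Dset.mp h2).1
    simp only at this
    omega
  · rw [fA_br3 hn A hi, fA_br1 hn A hj] at hEq
    have h1 := Finset.orderEmbOfFin_mem (Sset A) (card_Sset A) ⟨j.val, hj⟩
    rw [← hEq] at h1
    have h2 := Finset.orderEmbOfFin_mem (Dset hn A) (card_Dset hn A)
      ⟨n - 1 - i.val, by have h3 := i.isLt; have h4 := card_le A; omega⟩
    exact absurd h1 (mem_Dset.mp h2).2
  · rw [fA_br3 hn A hi, fA_br2 hn A hj] at hEq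
    have h2 := Finset.orderEmbOfFin_mem (Dset hn A) (card_Dset hn A)
      ⟨n - 1 - i.val, by have h3 := i.isLt; have h4 := card_le A; omega⟩
    rw [hEq] at h2
    have := (mem_Dset.mp h2).1
    simp only at this
    omega
  · rw [fA_br3 hn A hi, fA_br3 hn A hj] at hEq
    have := ((Dset hn A).orderEmbOfFin (card_Dset hn A)).injective hEq
    have hv := congrArg Fin.val this
    simp only at hv
    have h3 := i.isLt
    have h4 := j.isLt
    exact Fin.ext (by omega)

noncomputable def FA (hn : 3 ≤ n) (A : Finset (Fin (n - 3))) : Equiv.Perm (Fin n) :=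
  Equiv.ofBijective (fA hn A) ((Finite.injective_iff_bijective).mp (fA_injective hn A))

lemma FA_apply (hn : 3 ≤ n) (A : Finset (Fin (n - 3))) (i : Fin n) :
    FA hn A i = fA hn A i := rfl

lemma pv_FA (hn : 3 ≤ n) (A : Finset (Fin (n - 3))) {i : ℕ} (h : i < n) :
    pv (FA hn A) i = (fA hn A ⟨i, h⟩).val := by
  rw [pv_def _ h]; rfl


lemma pv_FA_peak (hn : 3 ≤ n) (A : Finset (Fin (n - 3))) :
    pv (FA hn A) A.card = n - 1 := by
  have hc : A.card < n := by have := card_le A; omega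
  rw [pv_FA hn A hc, fA_br2 hn A rfl]

lemma pv_FA_last (hn : 3 ≤ n) (A : Finset (Fin (n - 3))) :
    pv (FA hn A) (n - 1) = 0 := by
  have hc : A.card < n - 1 := by have := card_le A; omega
  have hn1 : n - 1 < n := by omega
  rw [pv_FA hn A hn1, fA_br3 hn A (show A.card < (⟨n - 1, hn1⟩ : Fin n).val from hc)]
  have hpos : 0 < n - 1 - A.card := by omega
  have hidx : (⟨n - 1 - (⟨n - 1, hn1⟩ : Fin n).val, by have := card_le A; (try simp only [val_mk']); omega⟩ :
      Fin (n - 1 - A.card)) = ⟨0, hpos⟩ := Fin.ext (by (try simp only [val_mk']); omega)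
  rw [hidx, Finset.orderEmbOfFin_zero (card_Dset hn A) hpos]
  have hmem := zero_mem_Dset hn A
  have h1 : (Dset hn A).min' ⟨⟨0, by omega⟩, hmem⟩ ≤ ⟨0, by omega⟩ :=
    Finset.min'_le _ _ hmem
  have h2 : ((Dset hn A).min' ⟨⟨0, by omega⟩, hmem⟩).val < n :=
    ((Dset hn A).min' _).isLt
  have := Fin.le_def.mp h1
  simp only [val_mk'] at this
  omega

lemma pv_FA_next (hn : 3 ≤ n) (A : Finset (Fin (n - 3))) :
    pv (FA hn A) (A.card + 1) = n - 2 := by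
  have hcle := card_le A
  have hc : A.card + 1 < n := by omega
  rw [pv_FA hn A hc, fA_br3 hn A (show A.card < (⟨A.card + 1, hc⟩ : Fin n).val by
    simp only [val_mk']; omega)]
  have hpos : 0 < n - 1 - A.card := by omega
  have hidx : (⟨n - 1 - (⟨A.card + 1, hc⟩ : Fin n).val, by have := card_le A; (try simp only [val_mk']); omega⟩ :
      Fin (n - 1 - A.card)) = ⟨n - 1 - A.card - 1, by omega⟩ := Fin.ext (by (try simp only [val_mk']); omega)
  rw [hidx, Finset.orderEmbOfFin_last (card_Dset hn A) hpos]
  have hmem := top_mem_Dset hn A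
  have h1 : (⟨n - 2, by omega⟩ : Fin n) ≤ (Dset hn A).max' ⟨⟨n - 2, by omega⟩, hmem⟩ :=
    Finset.le_max' _ _ hmem
  have h2 := (mem_Dset.mp ((Dset hn A).max'_mem ⟨⟨n - 2, by omega⟩, hmem⟩)).1
  have h3 : ((Dset hn A).max' ⟨⟨n - 2, by omega⟩, hmem⟩).val < n :=
    ((Dset hn A).max' _).isLt
  have := Fin.le_def.mp h1
  simp only [val_mk'] at this
  omega

lemma uni_FA (hn : 3 ≤ n) (A : Finset (Fin (n - 3))) : Uni n A.card (pv (FA hn A)) := by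
  have hcle := card_le A
  constructor
  · intro i j hij hjm
    have hjn : j < n := by omega
    have hin : i < n := by omega
    rw [pv_FA hn A hin, pv_FA hn A hjn]
    rcases eq_or_lt_of_le hjm with he | hlt
    · rw [fA_br1 hn A (show (⟨i, hin⟩ : Fin n).val < A.card by (try simp only [val_mk']); omega),
        fA_br2 hn A (show (⟨j, hjn⟩ : Fin n).val = A.card from he)]
      have := (mem_Sset_bounds (Finset.orderEmbOfFin_mem (Sset A) (card_Sset A)
        ⟨i, by (try simp only [val_mk']); omega⟩)).2
      simp only [val_mk']
      omega
    · rw [fA_br1 hn A (show (⟨i, hin⟩ : Fin n).val < A.card by (try simp only [val_mk']); omega),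
        fA_br1 hn A (show (⟨j, hjn⟩ : Fin n).val < A.card from hlt)]
      have := ((Sset A).orderEmbOfFin (card_Sset A)).strictMono
        (show (⟨i, by (try simp only [val_mk']); omega⟩ : Fin A.card) < ⟨j, hlt⟩ from hij)
      exact Fin.lt_def.mp this
  · intro i j him hij hjn
    have hin : i < n := by omega
    rw [pv_FA hn A hin, pv_FA hn A hjn]
    rcases eq_or_lt_of_le him with he | hlt
    · rw [fA_br2 hn A (show (⟨i, hin⟩ : Fin n).val = A.card from he.symm),
        fA_br3 hn A (show A.card < (⟨j, hjn⟩ : Fin n).val by (try simp only [val_mk']); omega)]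
      have hmem := Finset.orderEmbOfFin_mem (Dset hn A) (card_Dset hn A)
        ⟨n - 1 - j, by omega⟩
      have h1 := (mem_Dset.mp hmem).1
      have h2 := ((Dset hn A).orderEmbOfFin (card_Dset hn A) ⟨n - 1 - j, by omega⟩).isLt
      simp only [val_mk']
      omega
    · rw [fA_br3 hn A (show A.card < (⟨i, hin⟩ : Fin n).val from hlt),
        fA_br3 hn A (show A.card < (⟨j, hjn⟩ : Fin n).val by (try simp only [val_mk']); omega)]
      have := ((Dset hn A).orderEmbOfFin (card_Dset hn A)).strictMono
        (show (⟨n - 1 - (⟨j, hjn⟩ : Fin n).val, by (try simp only [val_mk']); omega⟩ : Fin (n - 1 - A.card)) <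
          ⟨n - 1 - (⟨i, hin⟩ : Fin n).val, by (try simp only [val_mk']); omega⟩ from by
            rw [Fin.lt_def]; simp only [val_mk']; omega)
      exact Fin.lt_def.mp this

/-! ### the rotation -/

lemma pv_rot (hn : 3 ≤ n) {i : ℕ} (h : i < n) :
    pv (finRotate n) i = (i + 1) % n := by
  obtain ⟨t, rfl⟩ : ∃ t, n = t + 1 := ⟨n - 1, by omega⟩
  have hone : (1 : Fin (t + 1)).val = 1 := by
    rw [Fin.val_one']
    exact Nat.mod_eq_of_lt (by omega)
  rw [pv_def _ h, finRotate_succ_apply, Fin.val_add, hone]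

lemma pv_rot_lt (hn : 3 ≤ n) {i : ℕ} (h : i + 1 < n) :
    pv (finRotate n) i = i + 1 := by
  rw [pv_rot hn (by omega)]
  exact Nat.mod_eq_of_lt h

lemma pv_rot_last (hn : 3 ≤ n) : pv (finRotate n) (n - 1) = 0 := by
  rw [pv_rot hn (by omega), show n - 1 + 1 = n from by omega]
  exact Nat.mod_self n

lemma uni_rot (hn : 3 ≤ n) : Uni n (n - 2) (pv (finRotate n)) := by
  constructor
  · intro i j hij hjm
    rw [pv_rot_lt hn (by omega), pv_rot_lt hn (by omega)]
    omega
  · intro i j him hij hjn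
    have hi : i = n - 2 := by omega
    have hj : j = n - 1 := by omega
    rw [hi, hj, pv_rot_last hn, pv_rot_lt hn (by omega)]
    omega

lemma pv_rot_peak (hn : 3 ≤ n) : pv (finRotate n) (n - 2) = n - 1 := by
  rw [pv_rot_lt hn (by omega)]
  omega


lemma symm_val (π : Equiv.Perm (Fin n)) {v j : ℕ} (hv : v < n) (hj : j < n)
    (h : pv π j = v) : (π.symm ⟨v, hv⟩).val = j := by
  have he : π ⟨j, hj⟩ = ⟨v, hv⟩ := Fin.ext (by rw [← pv_def π hj, h])
  rw [← he, Equiv.symm_apply_apply]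

noncomputable def F (hn : 3 ≤ n) : Option (Finset (Fin (n - 3))) → Equiv.Perm (Fin n)
  | none => finRotate n
  | some A => FA hn A

lemma F_valid (hn : 3 ≤ n) (o : Option (Finset (Fin (n - 3)))) :
    AvoidsPat (F hn o) p213 ∧ AvoidsPat (F hn o) p312 ∧
      AvoidsConsecPat ((F hn o) ^ 2) p213 ∧ pv (F hn o) (n - 1) = 0 := by
  cases o with
  | none =>
    have hu := uni_rot hn
    obtain ⟨h1, h2⟩ := avoids_of_uni _ hu
    exact ⟨h1, h2, avoidsConsecSq _ (n - 2) hn (by omega) hu (pv_rot_peak hn)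
      (pv_rot_last hn) (fun h => absurd h (by omega)), pv_rot_last hn⟩
  | some A =>
    have hu := uni_FA hn A
    obtain ⟨h1, h2⟩ := avoids_of_uni _ hu
    exact ⟨h1, h2, avoidsConsecSq _ A.card hn (by have := card_le A; omega) hu
      (pv_FA_peak hn A) (pv_FA_last hn A) (fun _ => pv_FA_next hn A), pv_FA_last hn A⟩

lemma peak_FA_ne (hn : 3 ≤ n) (A : Finset (Fin (n - 3))) :
    pv (FA hn A) (n - 2) ≠ n - 1 := by
  intro h
  have hc : A.card < n - 2 := by have := card_le A; omega
  have hn2 : n - 2 < n := by omega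
  rw [pv_FA hn A hn2, fA_br3 hn A (show A.card < (⟨n - 2, hn2⟩ : Fin n).val from hc)] at h
  have hmem := Finset.orderEmbOfFin_mem (Dset hn A) (card_Dset hn A)
    ⟨n - 1 - (⟨n - 2, hn2⟩ : Fin n).val, by have := card_le A; (try simp only [val_mk']); omega⟩
  have h2 := (mem_Dset.mp hmem).1
  exact h2 h

lemma F_injective (hn : 3 ≤ n) : Function.Injective (F hn) := by
  have hSub : ∀ (C D : Finset (Fin (n - 3))), FA hn C = FA hn D → C.card = D.card →
      ∀ a : Fin (n - 3), a ∈ C → a ∈ D := by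
    intro C D hEq hcard a ha
    have hmemS : sIn a ∈ Sset C := Finset.mem_image_of_mem sIn ha
    have : (sIn a : Fin n) ∈ (↑(Sset C) : Set (Fin n)) := hmemS
    rw [← Finset.range_orderEmbOfFin (Sset C) (card_Sset C)] at this
    obtain ⟨j, hj⟩ := this
    have hjn : (j : ℕ) < n := by have := j.isLt; have := card_le C; omega
    have hbr : fA hn C ⟨j.val, hjn⟩ = sIn a := by
      rw [fA_br1 hn C (show (⟨j.val, hjn⟩ : Fin n).val < C.card from j.isLt)]
      rw [← hj]
      try (congr 1; exact Fin.ext rfl)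
    have hbr2 : fA hn D ⟨j.val, hjn⟩ = sIn a := by
      rw [← hbr]
      have : FA hn C ⟨j.val, hjn⟩ = FA hn D ⟨j.val, hjn⟩ := by rw [hEq]
      exact this.symm
    rw [fA_br1 hn D (show (⟨j.val, hjn⟩ : Fin n).val < D.card by
      have := j.isLt; (try simp only [val_mk']); omega)] at hbr2
    have hmemD : sIn a ∈ Sset D := by
      rw [← hbr2]
      exact Finset.orderEmbOfFin_mem _ _ _
    obtain ⟨b, hb, hv⟩ := mem_Sset_iff.mp hmemD
    have : a = b := by
      have : a.val + 1 = b.val + 1 := by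
        have := hv
        simp only [sIn, val_mk'] at this
        omega
      exact Fin.ext (by omega)
    rwa [this]
  intro o1 o2 hEq
  cases o1 with
  | none =>
    cases o2 with
    | none => rfl
    | some B =>
      exfalso
      apply peak_FA_ne hn B
      rw [show FA hn B = finRotate n from hEq.symm]
      exact pv_rot_peak hn
  | some A =>
    cases o2 with
    | none =>
      exfalso
      apply peak_FA_ne hn A
      rw [show FA hn A = finRotate n from hEq]
      exact pv_rot_peak hn
    | some B =>
      have hEq' : FA hn A = FA hn B := hEq
      have hcard : A.card = B.card := by
        have h1 : pv (FA hn B) A.card = n - 1 := by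
          rw [← hEq']; exact pv_FA_peak hn A
        have h2 : pv (FA hn B) B.card = n - 1 := pv_FA_peak hn B
        have hca : A.card < n := by have := card_le A; omega
        have hcb : B.card < n := by have := card_le B; omega
        exact pv_inj (FA hn B) hca hcb (h1.trans h2.symm)
      congr 1
      apply Finset.Subset.antisymm
      · exact fun a ha => hSub A B hEq' hcard a ha
      · exact fun a ha => hSub B A hEq'.symm hcard.symm a ha

lemma F_surjOn (hn : 3 ≤ n) (π : Equiv.Perm (Fin n))
    (h1 : AvoidsPat π p213) (h2 : AvoidsPat π p312)
    (h3 : AvoidsConsecPat (π ^ 2) p213) (h4 : pv π (n - 1) = 0) :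
    ∃ o, F hn o = π := by
  obtain ⟨m, hmn, hpeak, hu⟩ := uni_of_avoids π (by omega) h1 h2
  have hmlt : m < n - 1 := by
    have : m ≠ n - 1 := fun h => by rw [h, h4] at hpeak; omega
    omega
  rcases eq_or_lt_of_le (show m + 2 ≤ n from by omega) with hE | hE
  · -- m = n - 2 : the rotation
    refine ⟨none, ?_⟩
    have h00 : pv π 0 ≠ 0 := fun h => by
      have := pv_inj π (by omega) (by omega) (h.trans h4.symm); omega
    have hup : ∀ i, i < n - 1 → pv π i = i + 1 := by
      intro i hi
      have hlow := hu.monoChain i 0 (by omega)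
      rw [show 0 + i = i from by omega] at hlow
      have hhigh := hu.monoChain (m - i) i (by omega)
      rw [show i + (m - i) = m from by omega, hpeak] at hhigh
      omega
    apply Equiv.ext
    intro x
    apply Fin.ext
    have hl : ((F hn none) x).val = pv (finRotate n) x.val := pv_val _ x
    have hr : (π x).val = pv π x.val := pv_val π x
    rw [hl, hr, pv_rot hn x.isLt]
    rcases eq_or_lt_of_le (show x.val + 1 ≤ n from x.isLt) with hx | hx
    · rw [show x.val = n - 1 from by omega, h4, show n - 1 + 1 = n from by omega,
        Nat.mod_self]
    · rw [hup x.val (by omega), Nat.mod_eq_of_lt hx]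
  · -- m + 2 < n
    have hnext : pv π (m + 1) = n - 2 := by
      by_contra hne
      exact h3 (containsConsecSq π m hn hE hu hpeak h4 hne)
    have hprefix : ∀ i, i < m → 1 ≤ pv π i ∧ pv π i ≤ n - 3 := by
      intro i hi
      have hin : i < n := by omega
      have hvn := pv_lt π hin
      have e1 : pv π i ≠ 0 := fun h => by
        have := pv_inj π hin (by omega) (h.trans h4.symm); omega
      have e2 : pv π i ≠ n - 1 := fun h => by
        have := pv_inj π hin (by omega) (h.trans hpeak.symm); omega
      have e3 : pv π i ≠ n - 2 := fun h => by
        have := pv_inj π hin (by omega) (h.trans hnext.symm); omega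
      omega
    set A : Finset (Fin (n - 3)) :=
      Finset.univ.filter (fun a : Fin (n - 3) =>
        (π.symm ⟨a.val + 1, by have := a.isLt; omega⟩).val < m) with hA
    have memA : ∀ a : Fin (n - 3),
        a ∈ A ↔ (π.symm ⟨a.val + 1, by have := a.isLt; omega⟩).val < m := by
      intro a
      rw [hA, Finset.mem_filter]
      simp
    have memA' : ∀ i (hi : i < m),
        (⟨pv π i - 1, by have := hprefix i hi; omega⟩ : Fin (n - 3)) ∈ A := by
      intro i hi
      have hb := hprefix i hi
      rw [memA]
      have e : (⟨(⟨pv π i - 1, by omega⟩ : Fin (n - 3)).val + 1, by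
          have := hprefix i hi; (try simp only [val_mk']); omega⟩ : Fin n) =
          ⟨pv π i, by omega⟩ := Fin.ext (by (try simp only [val_mk']); omega)
      rw [e, symm_val π (by omega) (by omega) rfl]
      exact hi
    have hAcard : A.card = m := by
      rw [← Finset.card_range m]
      apply Finset.card_bij
        (fun a _ => (π.symm ⟨a.val + 1, by have := a.isLt; omega⟩).val)
      · intro a ha
        rw [Finset.mem_range]
        exact (memA a).mp ha
      · intro a1 h1' a2 h2' hEq
        have hf : π.symm ⟨a1.val + 1, by have := a1.isLt; omega⟩ =
            π.symm ⟨a2.val + 1, by have := a2.isLt; omega⟩ := Fin.ext hEq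
        have := π.symm.injective hf
        have hv := congrArg Fin.val this
        simp only [val_mk'] at hv
        exact Fin.ext (by omega)
      · intro j hj
        rw [Finset.mem_range] at hj
        have hb := hprefix j hj
        refine ⟨⟨pv π j - 1, by omega⟩, memA' j hj, ?_⟩
        have e : (⟨(⟨pv π j - 1, by omega⟩ : Fin (n - 3)).val + 1, by
            have := hprefix j hj; (try simp only [val_mk']); omega⟩ : Fin n) =
            ⟨pv π j, by omega⟩ := Fin.ext (by (try simp only [val_mk']); omega)
        rw [e, symm_val π (by omega) (by omega) rfl]
    refine ⟨some A, ?_⟩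
    have huniq1 : (fun j : Fin A.card => π ⟨j.val, by have := j.isLt; omega⟩) =
        (Sset A).orderEmbOfFin (card_Sset A) := by
      apply Finset.orderEmbOfFin_unique
      · intro j
        have hjm : j.val < m := by rw [← hAcard]; exact j.isLt
        have hb := hprefix j.val hjm
        rw [mem_Sset_iff]
        refine ⟨⟨pv π j.val - 1, by omega⟩, memA' j.val hjm, ?_⟩
        rw [← pv_def π (by omega : (j.val : ℕ) < n)]
        (try simp only [val_mk'])
        omega
      · intro j1 j2 hlt
        have hj2m : j2.val ≤ m := by have := j2.isLt; omega
        have := hu.mono j1.val j2.val hlt hj2m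
        rw [Fin.lt_def, pv_val, pv_val]
        (try simp only [val_mk'])
        exact this
    have huniq3 : (fun j : Fin (n - 1 - A.card) =>
        π ⟨n - 1 - j.val, by have := j.isLt; omega⟩) =
        (Dset hn A).orderEmbOfFin (card_Dset hn A) := by
      apply Finset.orderEmbOfFin_unique
      · intro j
        have hjb := j.isLt
        have hpos : m < n - 1 - j.val := by omega
        have hposn : n - 1 - j.val < n := by omega
        rw [mem_Dset]
        constructor
        · rw [pv_val]
          (try simp only [val_mk'])
          intro h
          have := pv_inj π hposn (by omega) (h.trans hpeak.symm)
          omega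
        · intro hmem
          obtain ⟨b, hbA, hbv⟩ := mem_Sset_iff.mp hmem
          rw [memA] at hbA
          rw [pv_val] at hbv
          (try simp only [val_mk'] at hbv)
          have hsymm : (π.symm ⟨b.val + 1, by have := b.isLt; omega⟩).val = n - 1 - j.val := by
            apply symm_val π (by have := b.isLt; omega) hposn
            omega
          omega
      · intro j1 j2 hlt
        have hj1 := j1.isLt
        have hj2 := j2.isLt
        have := hu.anti (n - 1 - j2.val) (n - 1 - j1.val) (by omega)
          (by rw [Fin.lt_def] at hlt; omega) (by omega)
        rw [Fin.lt_def, pv_val, pv_val]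
        (try simp only [val_mk'])
        exact this
    apply Equiv.ext
    intro x
    show fA hn A x = π x
    rcases lt_trichotomy x.val A.card with hx | hx | hx
    · rw [fA_br1 hn A hx, ← huniq1]
      try exact congrArg π (Fin.ext rfl)
    · rw [fA_br2 hn A hx]
      refine Fin.ext ?_
      have hv := pv_val π x
      have hxm : x.val = m := by omega
      rw [hxm] at hv
      rw [hv, hpeak]
    · rw [fA_br3 hn A hx, ← huniq3]
      try
        refine congrArg π (Fin.ext ?_)
        (try simp only [val_mk'])
        have := x.isLt
        omega

lemma last_iff (hn : 3 ≤ n) (π : Equiv.Perm (Fin n)) :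
    π ⟨n - 1, Nat.sub_lt (Nat.lt_of_lt_of_le (by decide) hn) Nat.one_pos⟩ = ⟨0, Nat.lt_of_lt_of_le (by decide) hn⟩ ↔ pv π (n - 1) = 0 :=
  ⟨fun h => by rw [pv_def π (Nat.sub_lt (Nat.lt_of_lt_of_le (by decide) hn) Nat.one_pos : n - 1 < n)]; exact congrArg Fin.val h,
   fun h => Fin.ext (by rw [← pv_def π (Nat.sub_lt (Nat.lt_of_lt_of_le (by decide) hn) Nat.one_pos : n - 1 < n)]; exact h)⟩

end Stmt12

/-- for n ≥ 3, the number of π ∈ S_n avoiding 213 and 312, with π²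
avoiding the consecutive pattern 213 and π(n) = 1, equals 2^{n−3} + 1. -/
theorem stmt12 (n : ℕ) (hn : 3 ≤ n) :
    Nat.card {π : Equiv.Perm (Fin n) //
        AvoidsPat π p213 ∧ AvoidsPat π p312 ∧ AvoidsConsecPat (π ^ 2) p213 ∧
        π ⟨n - 1, by omega⟩ = ⟨0, by omega⟩} =
      2 ^ (n - 3) + 1 := by
  classical
  have hchar : ∀ π : Equiv.Perm (Fin n),
      (AvoidsPat π p213 ∧ AvoidsPat π p312 ∧ AvoidsConsecPat (π ^ 2) p213 ∧
        π ⟨n - 1, by omega⟩ = ⟨0, by omega⟩) ↔ π ∈ Set.range (Stmt12.F hn) := by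
    intro π
    constructor
    · rintro ⟨h1, h2, h3, h4⟩
      obtain ⟨o, ho⟩ := Stmt12.F_surjOn hn π h1 h2 h3 ((Stmt12.last_iff hn π).mp h4)
      exact ⟨o, ho⟩
    · rintro ⟨o, rfl⟩
      obtain ⟨h1, h2, h3, h4⟩ := Stmt12.F_valid hn o
      exact ⟨h1, h2, h3, (Stmt12.last_iff hn _).mpr h4⟩
  have e1 : Nat.card {π : Equiv.Perm (Fin n) //
      AvoidsPat π p213 ∧ AvoidsPat π p312 ∧ AvoidsConsecPat (π ^ 2) p213 ∧
      π ⟨n - 1, by omega⟩ = ⟨0, by omega⟩} = Nat.card (Set.range (Stmt12.F hn)) :=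
    Nat.card_congr (Equiv.subtypeEquivRight hchar)
  rw [e1, Nat.card_range_of_injective (Stmt12.F_injective hn), Nat.card_eq_fintype_card,
    Fintype.card_option, Fintype.card_finset, Fintype.card_fin]
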